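/- arXiv:1202.0621 — 2 statements merged into one kernel-verified Lean document; each statement's English description precedes it below -/
import Mathlib

section
/- For any finite family of events {A_s}_{s ∈ S} and two distinguished indices s1, s2 ∈ S, the third-order Bonferroni-type bound holds: P(⋃_{s ∈ S} A_s) ≤ −(|S| − 3)·P(A_{s1} ∪ A_{s2}) + ∑_{s ∉ {s1,s2}} P(A_{s1} ∪ A_{s2} ∪ A_s). -/
open MeasureTheory

/-- Third-order Bonferroni-type bound:
`P(⋃ A_s) ≤ -(|S| - 3) P(A_{s1} ∪ A_{s2})
           + ∑_{s ∉ {s1,s2}} P(A_{s1} ∪ A_{s2} ∪ A_s)`. -/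
theorem bonferroni_third_order
    {Ω ι : Type*} [MeasurableSpace Ω] [DecidableEq ι]
    (P : Measure Ω) [IsProbabilityMeasure P]
    (S : Finset ι) (A : ι → Set Ω) (hA : ∀ s, MeasurableSet (A s))
    (s1 s2 : ι) (hs1 : s1 ∈ S) (hs2 : s2 ∈ S) (hne : s1 ≠ s2) :
    (P (⋃ s ∈ S, A s)).toReal ≤
      -((S.card : ℝ) - 3) * (P (A s1 ∪ A s2)).toReal +
        ∑ s ∈ (S.erase s1).erase s2, (P (A s1 ∪ A s2 ∪ A s)).toReal := by
  set B := A s1 ∪ A s2 with hBdef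
  have hBm : MeasurableSet B := (hA s1).union (hA s2)
  set S' := (S.erase s1).erase s2 with hS'def
  have hcard : S'.card = S.card - 2 := by
    rw [hS'def, Finset.card_erase_of_mem (Finset.mem_erase.2 ⟨hne.symm, hs2⟩),
      Finset.card_erase_of_mem hs1]
    omega
  have h2 : 2 ≤ S.card := Finset.one_lt_card.mpr ⟨s1, hs1, s2, hs2, hne⟩
  have hcardR : (S'.card : ℝ) = (S.card : ℝ) - 2 := by
    rw [hcard, Nat.cast_sub h2]; norm_num
  have key : ∀ s, (P (B ∪ A s)).toReal = (P B).toReal + (P (Bᶜ ∩ A s)).toReal := by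
    intro s
    have hd : Disjoint B (Bᶜ ∩ A s) :=
      Set.disjoint_left.2 fun x hx ⟨hx', _⟩ => hx' hx
    have hrw : B ∪ A s = B ∪ (Bᶜ ∩ A s) := by
      ext x; by_cases hx : x ∈ B <;> simp [hx]
    rw [hrw, measure_union hd (hBm.compl.inter (hA s)),
      ENNReal.toReal_add (measure_ne_top P _) (measure_ne_top P _)]
  have hsub : (⋃ s ∈ S, A s) ⊆ B ∪ ⋃ s ∈ S', Bᶜ ∩ A s := by
    intro x hx
    simp only [Set.mem_iUnion, exists_prop] at hx
    obtain ⟨s, hs, hxs⟩ := hx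
    by_cases hxB : x ∈ B
    · exact Or.inl hxB
    · refine Or.inr (Set.mem_biUnion ?_ ⟨hxB, hxs⟩)
      rw [hS'def]
      refine Finset.mem_erase.2 ⟨?_, Finset.mem_erase.2 ⟨?_, hs⟩⟩ <;>
        rintro rfl <;> exact hxB (by simp [B, hxs])
  have hle : (P (⋃ s ∈ S, A s)).toReal ≤
      (P B).toReal + ∑ s ∈ S', (P (Bᶜ ∩ A s)).toReal := by
    have h1 : P (⋃ s ∈ S, A s) ≤ P B + ∑ s ∈ S', P (Bᶜ ∩ A s) :=
      (measure_mono hsub).trans ((measure_union_le _ _).trans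
        (add_le_add_right (measure_biUnion_finset_le _ _) _))
    have h2' := ENNReal.toReal_mono ?_ h1
    · rwa [ENNReal.toReal_add (measure_ne_top P _) ?_,
        ENNReal.toReal_sum (fun s _ => measure_ne_top P _)] at h2'
      exact (ENNReal.sum_lt_top.2 fun s _ => measure_lt_top P _).ne
    · exact (ENNReal.add_lt_top.2 ⟨measure_lt_top P _,
        ENNReal.sum_lt_top.2 fun s _ => measure_lt_top P _⟩).ne
  have hsum : ∑ s ∈ S', (P (B ∪ A s)).toReal =
      (S'.card : ℝ) * (P B).toReal + ∑ s ∈ S', (P (Bᶜ ∩ A s)).toReal := by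
    rw [Finset.sum_congr rfl (fun s _ => key s), Finset.sum_add_distrib,
      Finset.sum_const, nsmul_eq_mul]
  rw [hsum, hcardR]
  linarith [hle]
end

section
/- If three distinct BPSK codeword images s0, s1, s2 of a binary linear code form a right angle at s0 together with the existence of the completing codeword, then the four points s0, s1, s2, s3 (where s3 is the image of c1 + c2) satisfy: s1 − s0 is orthogonal to s2 − s0, s3 − s1 = s2 − s0, and s3 − s2 = s1 − s0, hence they are the vertices of a rectangle. -/
open scoped RealInnerProductSpace

/-- The BPSK map `c ↦ (1 - 2 c_t)_t`. -/
noncomputable def bpsk (n : ℕ) (c : Fin n → ZMod 2) : EuclideanSpace ℝ (Fin n) :=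
  WithLp.toLp 2 (fun t => 1 - 2 * ((c t).val : ℝ))

/-- If the BPSK images of distinct codewords `0, c1, c2` form a right angle
at `s0`, then `s0, s1, s2` and the image `s3` of `c3 = c1 + c2` are the
vertices of a rectangle: `s1 - s0 ⊥ s2 - s0`, `s3 - s1 = s2 - s0` and
`s3 - s2 = s1 - s0`. -/
theorem bpsk_rectangle (n : ℕ)
    (C : Submodule (ZMod 2) (Fin n → ZMod 2))
    (c1 c2 : Fin n → ZMod 2) (h1 : c1 ∈ C) (h2 : c2 ∈ C)
    (h1ne : c1 ≠ 0) (h2ne : c2 ≠ 0) (hne : c1 ≠ c2)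
    (hright : ⟪bpsk n c1 - bpsk n 0, bpsk n c2 - bpsk n 0⟫ = 0) :
    ⟪bpsk n c1 - bpsk n 0, bpsk n c2 - bpsk n 0⟫ = 0 ∧
      bpsk n (c1 + c2) - bpsk n c1 = bpsk n c2 - bpsk n 0 ∧
      bpsk n (c1 + c2) - bpsk n c2 = bpsk n c1 - bpsk n 0 := by
  -- From orthogonality, the supports of c1 and c2 are disjoint.
  have key : ∀ t, c1 t = 0 ∨ c2 t = 0 := by
    have hsum : ∑ t, ((4 : ℝ) * ((c1 t).val : ℝ) * ((c2 t).val : ℝ)) = 0 := by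
      rw [← hright]
      rw [PiLp.inner_apply]
      refine Finset.sum_congr rfl fun t _ => ?_
      simp [bpsk, RCLike.inner_apply]
      ring
    have hterm : ∀ t ∈ Finset.univ,
        (0:ℝ) ≤ (4 : ℝ) * ((c1 t).val : ℝ) * ((c2 t).val : ℝ) := by
      intro t _
      positivity
    have hzero := (Finset.sum_eq_zero_iff_of_nonneg hterm).mp hsum
    intro t
    have ht := hzero t (Finset.mem_univ t)
    rcases mul_eq_zero.mp ht with h | h
    · rcases mul_eq_zero.mp h with h' | h'
      · norm_num at h'
      · left
        have : (c1 t).val = 0 := by exact_mod_cast h'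
        exact (ZMod.val_eq_zero _).mp this
    · right
      have : (c2 t).val = 0 := by exact_mod_cast h
      exact (ZMod.val_eq_zero _).mp this
  refine ⟨hright, ?_, ?_⟩ <;> ext t <;>
    rcases key t with h | h <;>
    simp [bpsk, Pi.add_apply, h, PiLp.sub_apply] <;> ring
end
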